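/- For every 0 < s < N/2 and every x ∈ ℝ^N, ∫_{ℝ^N} |x−y|^{−2s} (1+|y|²)^{−(N−s)} dy = ℐ(s) (1+|x|²)^{−s}, where ℐ(s) := π^{N/2} Γ((N−2s)/2) / Γ(N−s). -/

import Mathlib

noncomputable section
open MeasureTheory Real Set Filter

/-- `ℝ^N` as a Euclidean space. -/
abbrev Eu (N : ℕ) := EuclideanSpace ℝ (Fin N)


lemma gammaIntegrableOn {p b : ℝ} (hp : 0 < p) (hb : 0 < b) :
    IntegrableOn (fun t : ℝ => t ^ (p - 1) * Real.exp (-(b * t))) (Ioi 0) := by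
  have h0 : IntegrableOn (fun x : ℝ => Real.exp (-x) * x ^ (p - 1)) (Ioi 0) :=
    Real.GammaIntegral_convergent hp
  have h1 : IntegrableOn (fun x : ℝ => Real.exp (-(b * x)) * (b * x) ^ (p - 1)) (Ioi 0) := by
    have := (integrableOn_Ioi_comp_mul_left_iff
      (fun x : ℝ => Real.exp (-x) * x ^ (p - 1)) 0 hb).mpr (by simpa using h0)
    simpa using this
  have h2 : IntegrableOn
      (fun x : ℝ => b ^ (1 - p) * (Real.exp (-(b * x)) * (b * x) ^ (p - 1))) (Ioi 0) :=
    h1.const_mul (b ^ (1 - p))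
  refine MeasureTheory.IntegrableOn.congr_fun h2 (fun t ht => ?_) measurableSet_Ioi
  have htpos : (0:ℝ) < t := ht
  rw [Real.mul_rpow hb.le htpos.le]
  rw [show b ^ (1 - p) * (Real.exp (-(b * t)) * (b ^ (p - 1) * t ^ (p - 1)))
      = (b ^ (1 - p) * b ^ (p - 1)) * (t ^ (p - 1) * Real.exp (-(b * t))) by ring,
    ← Real.rpow_add hb]
  norm_num

lemma lint_gamma {p b : ℝ} (hp : 0 < p) (hb : 0 < b) :
    ∫⁻ t in Ioi (0:ℝ), ENNReal.ofReal (t ^ (p - 1) * Real.exp (-(b * t))) =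
      ENNReal.ofReal (b ^ (-p) * Real.Gamma p) := by
  rw [← ofReal_integral_eq_lintegral_ofReal (gammaIntegrableOn hp hb)
      (ae_restrict_of_forall_mem measurableSet_Ioi (fun t ht => by
        have : (0:ℝ) < t := ht
        positivity)),
    integral_rpow_mul_exp_neg_mul_Ioi hp hb]
  congr 1
  rw [one_div, Real.rpow_neg hb.le, Real.inv_rpow hb.le]


lemma integrable_gauss (N : ℕ) {b : ℝ} (hb : 0 < b) :
    Integrable (fun v : Eu N => Real.exp (-(b * ‖v‖ ^ 2))) := by
  have h := GaussianFourier.integrable_cexp_neg_mul_sq_norm_add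
    (V := Eu N) (b := (b : ℂ)) (by simpa using hb) 0 0
  have h2 := h.norm
  refine h2.congr (Filter.Eventually.of_forall (fun v => ?_))
  simp [Complex.norm_exp, neg_mul]
  left; norm_cast

lemma lint_gauss (N : ℕ) {b : ℝ} (hb : 0 < b) :
    ∫⁻ v : Eu N, ENNReal.ofReal (Real.exp (-(b * ‖v‖ ^ 2))) =
      ENNReal.ofReal ((π / b) ^ ((N : ℝ) / 2)) := by
  rw [← ofReal_integral_eq_lintegral_ofReal (integrable_gauss N hb)
      (Filter.Eventually.of_forall (fun v => (Real.exp_pos _).le))]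
  congr 1
  have := GaussianFourier.integral_rexp_neg_mul_sq_norm (V := Eu N) hb
  simp only [neg_mul] at this ⊢
  rw [this, finrank_euclideanSpace_fin]

lemma lint_scale {f : ℝ → ENNReal} (hf : Measurable f) {c : ℝ} (hc : 0 < c) :
    ∫⁻ t in Ioi (0:ℝ), f t = ENNReal.ofReal c * ∫⁻ v in Ioi (0:ℝ), f (c * v) := by
  have hmap : Measure.map (fun v : ℝ => c * v) volume
      = ENNReal.ofReal |c⁻¹| • volume := Real.map_volume_mul_left hc.ne'
  have key : ∫⁻ v, (Ioi (0:ℝ)).indicator f (c * v) ∂volume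
      = ENNReal.ofReal |c⁻¹| * ∫⁻ t, (Ioi (0:ℝ)).indicator f t ∂volume := by
    rw [← lintegral_map (hf.indicator measurableSet_Ioi) (measurable_const_mul c), hmap,
      lintegral_smul_measure, smul_eq_mul]
  have hind : ∀ v : ℝ, (Ioi (0:ℝ)).indicator f (c * v)
      = (Ioi (0:ℝ)).indicator (fun v => f (c * v)) v := by
    intro v
    by_cases hv : v ∈ Ioi (0:ℝ)
    · rw [indicator_of_mem hv, indicator_of_mem (by exact mul_pos hc hv)]
    · rw [indicator_of_notMem hv, indicator_of_notMem]
      simp only [mem_Ioi, not_lt] at hv ⊢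
      exact mul_nonpos_of_nonneg_of_nonpos hc.le hv
  simp_rw [hind] at key
  rw [lintegral_indicator measurableSet_Ioi, lintegral_indicator measurableSet_Ioi] at key
  rw [key, ← mul_assoc, abs_of_pos (inv_pos.mpr hc), ← ENNReal.ofReal_mul hc.le,
    mul_inv_cancel₀ hc.ne', ENNReal.ofReal_one, one_mul]

lemma sq_expand (N : ℕ) (x y : Eu N) {t u : ℝ} (ht : 0 < t) (hu : 0 < u) :
    ‖x - y‖ ^ 2 * t + (1 + ‖y‖ ^ 2) * u
      = (t + u) * ‖y - (t / (t + u)) • x‖ ^ 2 + (u + ‖x‖ ^ 2 * t * u / (t + u)) := by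
  have hr : t + u ≠ 0 := by positivity
  have h1 : ‖x - y‖ ^ 2 = ‖x‖ ^ 2 - 2 * inner ℝ x y + ‖y‖ ^ 2 := @norm_sub_sq_real (Eu N) _ _ x y
  have h2 : ‖y - (t / (t + u)) • x‖ ^ 2
      = ‖y‖ ^ 2 - 2 * ((t / (t + u)) * inner ℝ x y) + (t / (t + u)) ^ 2 * ‖x‖ ^ 2 := by
    rw [@norm_sub_sq_real (Eu N) _ _ y ((t / (t + u)) • x), real_inner_smul_right,
      real_inner_comm, norm_smul]
    rw [mul_pow, Real.norm_eq_abs, sq_abs]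
  rw [h1, h2]
  field_simp
  ring

lemma lint_gauss_shift (N : ℕ) (x : Eu N) {t u : ℝ} (ht : 0 < t) (hu : 0 < u) :
    ∫⁻ y : Eu N, ENNReal.ofReal
        (Real.exp (-(‖x - y‖ ^ 2 * t)) * Real.exp (-((1 + ‖y‖ ^ 2) * u)))
      = ENNReal.ofReal ((π / (t + u)) ^ ((N : ℝ) / 2)
          * Real.exp (-(u + ‖x‖ ^ 2 * t * u / (t + u)))) := by
  have htu : 0 < t + u := by positivity
  have hpt : ∀ y : Eu N,
      Real.exp (-(‖x - y‖ ^ 2 * t)) * Real.exp (-((1 + ‖y‖ ^ 2) * u))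
        = Real.exp (-((t + u) * ‖y - (t / (t + u)) • x‖ ^ 2))
            * Real.exp (-(u + ‖x‖ ^ 2 * t * u / (t + u))) := by
    intro y
    rw [← Real.exp_add, ← Real.exp_add, ← neg_add, ← neg_add, sq_expand N x y ht hu]
  simp_rw [hpt, ENNReal.ofReal_mul (Real.exp_pos _).le]
  rw [lintegral_mul_const'' _ (by fun_prop)]
  have hshift : ∫⁻ y : Eu N, ENNReal.ofReal (Real.exp (-((t + u) * ‖y - (t / (t + u)) • x‖ ^ 2)))
      = ∫⁻ y : Eu N, ENNReal.ofReal (Real.exp (-((t + u) * ‖y‖ ^ 2))) :=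
    lintegral_sub_right_eq_self
      (fun y : Eu N => ENNReal.ofReal (Real.exp (-((t + u) * ‖y‖ ^ 2)))) _
  rw [hshift, lint_gauss N htu, ← ENNReal.ofReal_mul (by positivity)]



lemma upow_merge {u : ℝ} (hu : 0 < u) (N s : ℝ) :
    u * u ^ (s - 1) * u ^ (N - s - 1) * u ^ (-(N / 2)) = u ^ (N / 2 - 1) := by
  nth_rewrite 1 [← Real.rpow_one u]
  rw [← Real.rpow_add hu, ← Real.rpow_add hu, ← Real.rpow_add hu]
  congr 1
  ring

lemma Halg {N s a u v : ℝ} (hu : 0 < u) (hv : 0 < v) (ha : 0 ≤ a) :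
    u * ((u * v) ^ (s - 1) * u ^ (N - s - 1) *
        ((π / (u * v + u)) ^ (N / 2) * Real.exp (-(u + a * (u * v) * u / (u * v + u)))))
      = π ^ (N / 2) * ((v ^ (s - 1) * (1 + v) ^ (-(N / 2))) *
          (u ^ (N / 2 - 1) * Real.exp (-((1 + a * v / (1 + v)) * u)))) := by
  have h1v : (0:ℝ) < 1 + v := by linarith
  have huv : u * v + u = u * (1 + v) := by ring
  have hexp : -(u + a * (u * v) * u / (u * v + u)) = -((1 + a * v / (1 + v)) * u) := by
    rw [huv]
    field_simp
  have hdiv : (π / (u * v + u)) ^ (N / 2)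
      = π ^ (N / 2) * (u ^ (-(N / 2)) * (1 + v) ^ (-(N / 2))) := by
    rw [huv, Real.div_rpow pi_pos.le (by positivity), Real.mul_rpow hu.le h1v.le,
      Real.rpow_neg hu.le, Real.rpow_neg h1v.le]
    field_simp
  have hmul : (u * v) ^ (s - 1) = u ^ (s - 1) * v ^ (s - 1) :=
    Real.mul_rpow hu.le hv.le
  rw [hexp, hdiv, hmul, show
    u * (u ^ (s-1) * v ^ (s-1) * u ^ (N-s-1) * (π ^ (N/2) * (u ^ (-(N/2)) * (1+v) ^ (-(N/2))) * Real.exp (-((1 + a*v/(1+v)) * u))))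
    = (u * u ^ (s-1) * u ^ (N-s-1) * u ^ (-(N/2))) * (v ^ (s-1) * π ^ (N/2) * (1+v) ^ (-(N/2)) * Real.exp (-((1 + a*v/(1+v)) * u))) by ring,
    upow_merge hu]
  ring

lemma lint_beta {p r : ℝ} (hp : 0 < p) (hpr : p < r) :
    ∫⁻ v in Ioi (0:ℝ), ENNReal.ofReal (v ^ (p - 1) * (1 + v) ^ (-r))
      = ENNReal.ofReal (Real.Gamma p * Real.Gamma (r - p) / Real.Gamma r) := by
  have hr : 0 < r := hp.trans hpr
  have hΓr : 0 < Real.Gamma r := Real.Gamma_pos_of_pos hr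
  set K : ℝ × ℝ → ENNReal := fun q =>
    ENNReal.ofReal ((q.2 ^ (r - 1) * Real.exp (-q.2))
      * (q.1 ^ (p - 1) * Real.exp (-(q.2 * q.1)))) with hK
  have hKm : Measurable K := by fun_prop
  have step1 : ∀ v : ℝ, v ∈ Ioi (0:ℝ) →
      ENNReal.ofReal (v ^ (p - 1) * (1 + v) ^ (-r)) * ENNReal.ofReal (Real.Gamma r)
        = ∫⁻ u in Ioi (0:ℝ), K (v, u) := by
    intro v hv
    have hv' : (0:ℝ) < v := hv
    have h1v : (0:ℝ) < 1 + v := by linarith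
    have hg := lint_gamma hr h1v
    have : ENNReal.ofReal (v ^ (p - 1)) * ∫⁻ u in Ioi (0:ℝ),
        ENNReal.ofReal (u ^ (r - 1) * Real.exp (-((1 + v) * u)))
        = ∫⁻ u in Ioi (0:ℝ), K (v, u) := by
      rw [← lintegral_const_mul'' _ (by fun_prop)]
      refine setLIntegral_congr_fun measurableSet_Ioi
        (fun u hu => ?_)
      rw [← ENNReal.ofReal_mul (by positivity)]
      congr 1
      rw [show -((1 + v) * u) = -u + -(u * v) by ring, Real.exp_add]
      ring
    rw [hg, ← ENNReal.ofReal_mul (by positivity)] at this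
    rw [← this, ← ENNReal.ofReal_mul (by positivity)]
    congr 1
    ring
  have swap : ∫⁻ v in Ioi (0:ℝ), ∫⁻ u in Ioi (0:ℝ), K (v, u)
      = ∫⁻ u in Ioi (0:ℝ), ∫⁻ v in Ioi (0:ℝ), K (v, u) :=
    lintegral_lintegral_swap (hKm.aemeasurable)
  have step2 : ∀ u : ℝ, u ∈ Ioi (0:ℝ) →
      ∫⁻ v in Ioi (0:ℝ), K (v, u)
        = ENNReal.ofReal (Real.Gamma p) *
            ENNReal.ofReal (u ^ (r - p - 1) * Real.exp (-(1 * u))) := by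
    intro u hu
    have hu' : (0:ℝ) < u := hu
    have : ∫⁻ v in Ioi (0:ℝ), K (v, u)
        = ENNReal.ofReal (u ^ (r - 1) * Real.exp (-u)) *
            ∫⁻ v in Ioi (0:ℝ), ENNReal.ofReal (v ^ (p - 1) * Real.exp (-(u * v))) := by
      rw [← lintegral_const_mul'' _ (by fun_prop)]
      refine setLIntegral_congr_fun measurableSet_Ioi
        (fun v hv => ?_)
      have hv' : (0:ℝ) < v := hv
      rw [hK, ← ENNReal.ofReal_mul (by positivity)]
    rw [this, lint_gamma hp hu', ← ENNReal.ofReal_mul (by positivity),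
      ← ENNReal.ofReal_mul (by positivity)]
    congr 1
    rw [show u ^ (r-1) * Real.exp (-u) * (u ^ (-p) * Real.Gamma p)
        = Real.Gamma p * ((u ^ (r-1) * u ^ (-p)) * Real.exp (-(1*u))) by rw [one_mul]; ring,
      ← Real.rpow_add hu']
    ring_nf
  have main : (∫⁻ v in Ioi (0:ℝ), ENNReal.ofReal (v ^ (p - 1) * (1 + v) ^ (-r)))
      * ENNReal.ofReal (Real.Gamma r)
      = ENNReal.ofReal (Real.Gamma p * Real.Gamma (r - p)) := by
    rw [← lintegral_mul_const'' _ (by fun_prop),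
      setLIntegral_congr_fun measurableSet_Ioi step1, swap,
      setLIntegral_congr_fun measurableSet_Ioi step2,
      lintegral_const_mul'' _ (by fun_prop), lint_gamma (by linarith : 0 < r - p) one_pos,
      ← ENNReal.ofReal_mul (Real.Gamma_pos_of_pos hp).le]
    rw [Real.one_rpow, one_mul]
  have hne : ENNReal.ofReal (Real.Gamma r) ≠ 0 := by
    simp [ENNReal.ofReal_eq_zero, not_le, hΓr]
  have hnt : ENNReal.ofReal (Real.Gamma r) ≠ ⊤ := ENNReal.ofReal_ne_top
  have main' : ENNReal.ofReal (Real.Gamma r) *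
      (∫⁻ v in Ioi (0:ℝ), ENNReal.ofReal (v ^ (p - 1) * (1 + v) ^ (-r)))
      = ENNReal.ofReal (Real.Gamma p * Real.Gamma (r - p)) := by rw [mul_comm]; exact main
  rw [(ENNReal.eq_div_iff hne hnt).mpr main', ENNReal.ofReal_div_of_pos hΓr]

/-- For every `0 < s < N/2` and every `x ∈ ℝ^N`,
`∫_{ℝ^N} |x−y|^{−2s} (1+|y|²)^{−(N−s)} dy = ℐ(s) (1+|x|²)^{−s}`,
where `ℐ(s) := π^{N/2} Γ((N−2s)/2) / Γ(N−s)`. -/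
theorem riesz_convolution_identity (N : ℕ) (s : ℝ) (hs0 : 0 < s) (hsN : s < (N : ℝ) / 2) :
    ∀ x : Eu N,
      ∫ y : Eu N, ‖x - y‖ ^ (-(2 * s)) * (1 + ‖y‖ ^ 2) ^ (-((N : ℝ) - s)) =
        (π ^ ((N : ℝ) / 2) * Real.Gamma (((N : ℝ) - 2 * s) / 2) / Real.Gamma ((N : ℝ) - s)) *
          (1 + ‖x‖ ^ 2) ^ (-s) := by
  intro x
  have hN : 0 < (N : ℝ) := by linarith
  have hN0 : 0 < N := by exact_mod_cast hN
  have hNs : 0 < (N : ℝ) - s := by linarith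
  have hN2 : 0 < (N : ℝ) / 2 := by linarith
  have hΓs : 0 < Real.Gamma s := Real.Gamma_pos_of_pos hs0
  have hΓNs : 0 < Real.Gamma ((N : ℝ) - s) := Real.Gamma_pos_of_pos hNs
  have hΓN2 : 0 < Real.Gamma ((N : ℝ) / 2) := Real.Gamma_pos_of_pos hN2
  have hΓN2s : 0 < Real.Gamma ((N : ℝ) / 2 - s) := Real.Gamma_pos_of_pos (by linarith)
  have ha : (0:ℝ) ≤ ‖x‖ ^ 2 := by positivity
  have hA0 : (0:ℝ) < 1 + ‖x‖ ^ 2 := by positivity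
  -- a.e. y ≠ x
  haveI : Nontrivial (Eu N) :=
    Module.nontrivial_of_finrank_pos (R := ℝ) (M := Eu N)
      (by rw [finrank_euclideanSpace_fin]; exact hN0)
  have hae : ∀ᵐ y : Eu N, y ≠ x := by
    have h0 : (volume : Measure (Eu N)) {x} = 0 := measure_singleton x
    rw [ae_iff]
    simpa using h0
  -- notation
  set F : Eu N → ℝ :=
    fun y => ‖x - y‖ ^ (-(2 * s)) * (1 + ‖y‖ ^ 2) ^ (-((N : ℝ) - s)) with hF
  set g : Eu N → ℝ → ℝ → ENNReal := fun y t u => ENNReal.ofReal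
    ((t ^ (s - 1) * Real.exp (-(‖x - y‖ ^ 2 * t))) *
      (u ^ ((N : ℝ) - s - 1) * Real.exp (-((1 + ‖y‖ ^ 2) * u)))) with hg
  set H : ℝ → ℝ → ℝ := fun t u => (t ^ (s - 1) * u ^ ((N : ℝ) - s - 1)) *
    ((π / (t + u)) ^ ((N : ℝ) / 2) * Real.exp (-(u + ‖x‖ ^ 2 * t * u / (t + u)))) with hH
  set K : ℝ → ℝ → ℝ := fun u v => π ^ ((N : ℝ) / 2) *
    ((v ^ (s - 1) * (1 + v) ^ (-((N : ℝ) / 2))) *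
      (u ^ ((N : ℝ) / 2 - 1) * Real.exp (-((1 + ‖x‖ ^ 2 * v / (1 + v)) * u)))) with hK
  set L : ENNReal := ∫⁻ y : Eu N, ENNReal.ofReal (F y) with hL
  set C : ENNReal := ENNReal.ofReal (Real.Gamma s * Real.Gamma ((N : ℝ) - s)) with hC
  -- Step A
  have stepA : L * C = ∫⁻ y : Eu N, ∫⁻ t in Ioi (0:ℝ), ∫⁻ u in Ioi (0:ℝ), g y t u := by
    rw [hL, ← lintegral_mul_const'' C (by fun_prop)]
    refine lintegral_congr_ae ?_
    filter_upwards [hae] with y hy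
    have hxy : (0:ℝ) < ‖x - y‖ := by
      rw [norm_pos_iff]
      exact sub_ne_zero.mpr (Ne.symm hy)
    have hr : (0:ℝ) < ‖x - y‖ ^ 2 := by positivity
    have hB : (0:ℝ) < 1 + ‖y‖ ^ 2 := by positivity
    have inner1 : ∀ t ∈ Ioi (0:ℝ), (∫⁻ u in Ioi (0:ℝ), g y t u)
        = ENNReal.ofReal (t ^ (s - 1) * Real.exp (-(‖x - y‖ ^ 2 * t))) *
          ENNReal.ofReal ((1 + ‖y‖ ^ 2) ^ (-((N : ℝ) - s)) * Real.Gamma ((N : ℝ) - s)) := by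
      intro t ht
      have ht' : (0:ℝ) < t := ht
      rw [← lint_gamma hNs hB, ← lintegral_const_mul'' _ (by fun_prop)]
      refine setLIntegral_congr_fun measurableSet_Ioi (fun u hu => ?_)
      rw [hg, ← ENNReal.ofReal_mul (by positivity)]
    rw [setLIntegral_congr_fun measurableSet_Ioi inner1,
      lintegral_mul_const'' _ (by fun_prop), lint_gamma hs0 hr, hC,
      ← ENNReal.ofReal_mul (by positivity), ← ENNReal.ofReal_mul (by positivity)]
    congr 1
    have hkey : ‖x - y‖ ^ (-(2 * s)) = (‖x - y‖ ^ 2) ^ (-s) := by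
      rw [← Real.rpow_natCast ‖x - y‖ 2, ← Real.rpow_mul (norm_nonneg _)]
      norm_num
    simp only [hF]
    rw [hkey]
    ring
  -- Step B : swaps to bring y inside
  have gm : Measurable (fun p : (Eu N × ℝ) × ℝ => g p.1.1 p.1.2 p.2) := by
    rw [hg]; fun_prop
  have stepB : (∫⁻ y : Eu N, ∫⁻ t in Ioi (0:ℝ), ∫⁻ u in Ioi (0:ℝ), g y t u)
      = ∫⁻ t in Ioi (0:ℝ), ∫⁻ u in Ioi (0:ℝ), ∫⁻ y : Eu N, g y t u := by
    rw [lintegral_lintegral_swap ((gm.lintegral_prod_right').aemeasurable)]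
    refine lintegral_congr fun t => ?_
    exact lintegral_lintegral_swap ((by fun_prop : Measurable
      (fun p : Eu N × ℝ => g p.1 t p.2)).aemeasurable)
  -- Step C : Gaussian integral in y
  have stepC : ∀ t ∈ Ioi (0:ℝ), ∀ u ∈ Ioi (0:ℝ),
      (∫⁻ y : Eu N, g y t u) = ENNReal.ofReal (H t u) := by
    intro t ht u hu
    have ht' : (0:ℝ) < t := ht
    have hu' : (0:ℝ) < u := hu
    have hpt : ∀ y : Eu N, g y t u = ENNReal.ofReal (t ^ (s - 1) * u ^ ((N : ℝ) - s - 1)) *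
        ENNReal.ofReal (Real.exp (-(‖x - y‖ ^ 2 * t)) * Real.exp (-((1 + ‖y‖ ^ 2) * u))) := by
      intro y
      rw [hg, ← ENNReal.ofReal_mul (by positivity)]
      congr 1
      ring
    simp_rw [hpt]
    rw [lintegral_const_mul'' _ (by fun_prop), lint_gauss_shift N x ht' hu',
      hH, ← ENNReal.ofReal_mul (by positivity)]
  -- Step D : swap t and u
  have stepD : (∫⁻ t in Ioi (0:ℝ), ∫⁻ u in Ioi (0:ℝ), ENNReal.ofReal (H t u))
      = ∫⁻ u in Ioi (0:ℝ), ∫⁻ t in Ioi (0:ℝ), ENNReal.ofReal (H t u) :=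
    lintegral_lintegral_swap ((by rw [hH]; fun_prop : Measurable
      (fun p : ℝ × ℝ => ENNReal.ofReal (H p.1 p.2))).aemeasurable)
  -- Step E : scaling t = u * v
  have stepE : ∀ u ∈ Ioi (0:ℝ), (∫⁻ t in Ioi (0:ℝ), ENNReal.ofReal (H t u))
      = ∫⁻ v in Ioi (0:ℝ), ENNReal.ofReal (K u v) := by
    intro u hu
    have hu' : (0:ℝ) < u := hu
    rw [lint_scale (by rw [hH]; fun_prop) hu', ← lintegral_const_mul'' _ (by fun_prop)]
    refine setLIntegral_congr_fun measurableSet_Ioi (fun v hv => ?_)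
    have hv' : (0:ℝ) < v := hv
    rw [← ENNReal.ofReal_mul hu'.le, hH, hK]
    congr 1
    exact Halg (N := (N:ℝ)) (s := s) (a := ‖x‖ ^ 2) hu' hv' ha
  -- Step F+G : swap u and v, compute u-integral
  have stepF : (∫⁻ u in Ioi (0:ℝ), ∫⁻ v in Ioi (0:ℝ), ENNReal.ofReal (K u v))
      = ∫⁻ v in Ioi (0:ℝ), ∫⁻ u in Ioi (0:ℝ), ENNReal.ofReal (K u v) :=
    lintegral_lintegral_swap ((by rw [hK]; fun_prop : Measurable
      (fun p : ℝ × ℝ => ENNReal.ofReal (K p.1 p.2))).aemeasurable)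
  have stepG : ∀ v ∈ Ioi (0:ℝ), (∫⁻ u in Ioi (0:ℝ), ENNReal.ofReal (K u v))
      = ENNReal.ofReal (π ^ ((N : ℝ) / 2) * Real.Gamma ((N : ℝ) / 2)) *
          ENNReal.ofReal (v ^ (s - 1) * (1 + (1 + ‖x‖ ^ 2) * v) ^ (-((N : ℝ) / 2))) := by
    intro v hv
    have hv' : (0:ℝ) < v := hv
    have h1v : (0:ℝ) < 1 + v := by linarith
    have hBv : (0:ℝ) < 1 + ‖x‖ ^ 2 * v / (1 + v) := by positivity
    have hpt : ∀ u : ℝ, ENNReal.ofReal (K u v)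
        = ENNReal.ofReal (π ^ ((N : ℝ) / 2) * (v ^ (s - 1) * (1 + v) ^ (-((N : ℝ) / 2)))) *
          ENNReal.ofReal (u ^ ((N : ℝ) / 2 - 1) *
            Real.exp (-((1 + ‖x‖ ^ 2 * v / (1 + v)) * u))) := by
      intro u
      rw [hK, ← ENNReal.ofReal_mul (by positivity)]
      congr 1
      ring
    simp_rw [hpt]
    rw [lintegral_const_mul'' _ (by fun_prop), lint_gamma hN2 hBv,
      ← ENNReal.ofReal_mul (by positivity), ← ENNReal.ofReal_mul (by positivity)]
    congr 1
    -- real identity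
    have hBeq : 1 + ‖x‖ ^ 2 * v / (1 + v) = (1 + (1 + ‖x‖ ^ 2) * v) / (1 + v) := by
      field_simp
      ring
    have h3 : (1 + v) ^ (-((N:ℝ) / 2)) * (1 + v) ^ ((N:ℝ) / 2) = 1 := by
      rw [← Real.rpow_add h1v]
      norm_num
    have h4 : (1 + (1 + ‖x‖ ^ 2) * v) ^ (-((N:ℝ) / 2)) / (1 + v) ^ (-((N:ℝ) / 2))
        = (1 + (1 + ‖x‖ ^ 2) * v) ^ (-((N:ℝ) / 2)) * (1 + v) ^ ((N:ℝ) / 2) := by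
      rw [Real.rpow_neg h1v.le, div_inv_eq_mul]
    rw [hBeq, Real.div_rpow (by positivity) h1v.le, h4]
    linear_combination (π ^ ((N:ℝ) / 2) * Real.Gamma ((N:ℝ) / 2) * v ^ (s - 1) *
      (1 + (1 + ‖x‖ ^ 2) * v) ^ (-((N:ℝ) / 2))) * h3
  -- Step I : final v integral
  have hconst : ENNReal.ofReal ((1 + ‖x‖ ^ 2)⁻¹) *
      ENNReal.ofReal (((1 + ‖x‖ ^ 2)⁻¹) ^ (s - 1))
      = ENNReal.ofReal ((1 + ‖x‖ ^ 2) ^ (-s)) := by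
    rw [← ENNReal.ofReal_mul (by positivity)]
    congr 1
    nth_rewrite 1 [← Real.rpow_one (1 + ‖x‖ ^ 2)⁻¹]
    rw [← Real.rpow_add (by positivity), show (1:ℝ) + (s - 1) = s by ring,
      Real.inv_rpow hA0.le, ← Real.rpow_neg hA0.le]
  have stepI : (∫⁻ v in Ioi (0:ℝ), ENNReal.ofReal
        (v ^ (s - 1) * (1 + (1 + ‖x‖ ^ 2) * v) ^ (-((N : ℝ) / 2))))
      = ENNReal.ofReal ((1 + ‖x‖ ^ 2) ^ (-s)) *
          ENNReal.ofReal (Real.Gamma s * Real.Gamma ((N : ℝ) / 2 - s) /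
            Real.Gamma ((N : ℝ) / 2)) := by
    rw [lint_scale (by fun_prop) (inv_pos.mpr hA0)]
    have hcong : ∀ w ∈ Ioi (0:ℝ), ENNReal.ofReal (((1 + ‖x‖ ^ 2)⁻¹ * w) ^ (s - 1) *
          (1 + (1 + ‖x‖ ^ 2) * ((1 + ‖x‖ ^ 2)⁻¹ * w)) ^ (-((N : ℝ) / 2)))
        = ENNReal.ofReal (((1 + ‖x‖ ^ 2)⁻¹) ^ (s - 1)) *
            ENNReal.ofReal (w ^ (s - 1) * (1 + w) ^ (-((N : ℝ) / 2))) := by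
      intro w hw
      have hw' : (0:ℝ) < w := hw
      rw [← ENNReal.ofReal_mul (by positivity)]
      congr 1
      have h1 : (1 + ‖x‖ ^ 2) * ((1 + ‖x‖ ^ 2)⁻¹ * w) = w := by field_simp
      rw [h1, Real.mul_rpow (by positivity) hw'.le]
      ring
    rw [setLIntegral_congr_fun measurableSet_Ioi hcong,
      lintegral_const_mul'' _ (by fun_prop), lint_beta hs0 hsN, ← mul_assoc, hconst]
  -- assemble everything
  have chain : C * L = ENNReal.ofReal ((π ^ ((N:ℝ)/2) * Real.Gamma ((N:ℝ)/2)) *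
      ((1 + ‖x‖ ^ 2) ^ (-s) *
        (Real.Gamma s * Real.Gamma ((N:ℝ)/2 - s) / Real.Gamma ((N:ℝ)/2)))) := by
    rw [mul_comm, stepA, stepB,
      setLIntegral_congr_fun measurableSet_Ioi (fun t ht =>
        setLIntegral_congr_fun measurableSet_Ioi (stepC t ht)),
      stepD,
      setLIntegral_congr_fun measurableSet_Ioi stepE,
      stepF,
      setLIntegral_congr_fun measurableSet_Ioi stepG,
      lintegral_const_mul'' _ (by fun_prop), stepI,
      ← ENNReal.ofReal_mul (by positivity), ← ENNReal.ofReal_mul (by positivity)]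
  have hCne : C ≠ 0 := by
    rw [hC]
    simp only [ne_eq, ENNReal.ofReal_eq_zero, not_le]
    positivity
  have hCnt : C ≠ ⊤ := by rw [hC]; exact ENNReal.ofReal_ne_top
  have hLval : L = ENNReal.ofReal ((π ^ ((N:ℝ)/2) * Real.Gamma (((N:ℝ) - 2*s)/2) /
      Real.Gamma ((N:ℝ) - s)) * (1 + ‖x‖ ^ 2) ^ (-s)) := by
    rw [(ENNReal.eq_div_iff hCne hCnt).mpr chain, hC, ← ENNReal.ofReal_div_of_pos (by positivity)]
    congr 1
    rw [show ((N:ℝ) - 2*s)/2 = (N:ℝ)/2 - s by ring]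
    field_simp
  -- conclude
  have hnn : 0 ≤ᵐ[volume] F := Eventually.of_forall (fun y => by
    have h1 : (0:ℝ) ≤ ‖x - y‖ ^ (-(2*s)) := Real.rpow_nonneg (norm_nonneg _) _
    have h2 : (0:ℝ) ≤ (1 + ‖y‖ ^ 2) ^ (-((N:ℝ) - s)) := Real.rpow_nonneg (by positivity) _
    exact mul_nonneg h1 h2)
  have hmeas : AEStronglyMeasurable F volume := by
    rw [hF]; apply Measurable.aestronglyMeasurable; fun_prop
  rw [show (∫ y : Eu N, ‖x - y‖ ^ (-(2 * s)) * (1 + ‖y‖ ^ 2) ^ (-((N : ℝ) - s)))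
      = ∫ y : Eu N, F y from rfl,
    integral_eq_lintegral_of_nonneg_ae hnn hmeas, ← hL, hLval,
    ENNReal.toReal_ofReal (mul_nonneg (div_nonneg (mul_nonneg
      (Real.rpow_nonneg pi_pos.le _) (Real.Gamma_pos_of_pos (by linarith : (0:ℝ) < ((N:ℝ) - 2*s)/2)).le)
      hΓNs.le) (Real.rpow_nonneg hA0.le _))]
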